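/- Let p be a probability distribution on a finite nonempty set Y and let u be the uniform distribution on Y. Then the statistical distance between p and u satisfies d(p, u) ≤ (1/2)·√(Δ_p·|Y| − 1). -/

import Mathlib

/-- Statistical distance from uniform is controlled by the collision
probability: for a probability distribution `p` on a finite nonempty set `Y`,
`d(p, u) ≤ (1/2)·√(Δ_p · |Y| − 1)` where `u` is the uniform distribution. -/
theorem dist_to_uniform_le {Y : Type*} [Fintype Y] [Nonempty Y]
    (p : Y → ℝ) (h0 : ∀ y, 0 ≤ p y) (h1 : ∑ y, p y = 1) :
    (1 / 2) * ∑ y : Y, |p y - 1 / (Fintype.card Y : ℝ)|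
      ≤ (1 / 2) * Real.sqrt ((∑ y : Y, (p y) ^ 2) * Fintype.card Y - 1) := by
  set n : ℝ := (Fintype.card Y : ℝ)
  have hn : 0 < n := by
    have : (0:ℕ) < Fintype.card Y := Fintype.card_pos
    exact Nat.cast_pos.mpr this
  have key : (∑ y : Y, |p y - 1 / n|) ^ 2
      ≤ n * ∑ y : Y, (p y - 1 / n) ^ 2 := by
    have := sq_sum_le_card_mul_sum_sq (s := (Finset.univ : Finset Y))
      (f := fun y => |p y - 1 / n|)
    simpa [sq_abs, Finset.card_univ] using this
  have hsumsq : n * ∑ y : Y, (p y - 1 / n) ^ 2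
      = (∑ y : Y, (p y) ^ 2) * n - 1 := by
    have : ∑ y : Y, (p y - 1 / n) ^ 2
        = ∑ y : Y, ((p y) ^ 2 - 2 / n * p y + 1 / n ^ 2) := by
      apply Finset.sum_congr rfl
      intro y _
      field_simp
      ring
    rw [this, Finset.sum_add_distrib, Finset.sum_sub_distrib,
      ← Finset.mul_sum, h1, Finset.sum_const, Finset.card_univ]
    field_simp
    have hc : n * (Fintype.card Y • (1 / n ^ 2)) = 1 := by
      rw [nsmul_eq_mul]
      change n * (n * (1 / n ^ 2)) = 1
      rw [show n * (n * (1 / n ^ 2)) = (n * n⁻¹) ^ 2 by ring, mul_inv_cancel₀ hn.ne', one_pow]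
    rw [hc]
    ring
  have hle : ∑ y : Y, |p y - 1 / n| ≤ Real.sqrt ((∑ y : Y, (p y) ^ 2) * n - 1) := by
    rw [← hsumsq]
    have habs : 0 ≤ ∑ y : Y, |p y - 1 / n| :=
      Finset.sum_nonneg fun y _ => abs_nonneg _
    exact (Real.le_sqrt habs (by positivity)).mpr key
  linarith
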